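/- arXiv:1901.11314 — 3 statements merged into one kernel-verified Lean document; each statement's English description precedes it below -/
import Mathlib

section
/- Let X be a topological space and let F and G be commuting homeomorphisms of X of finite orders n ≥ 1 and m ≥ 1 respectively. Let Ḡ be the homeomorphism of X/⟨F⟩ induced by G. Suppose there exists a point x₀ ∈ X whose stabilizer in the group ⟨F,G⟩ is trivial, i.e., the only element of ⟨F,G⟩ fixing x₀ is the identity. Then the order of Ḡ is strictly less than m if, and only if, F^l = G^k for some integers 0 < k < m and 0 < l < n. -/
/-- The group of self-homeomorphisms of a topological space `X`,
with multiplication given by composition: `(f * g) x = f (g x)`. -/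
instance Homeomorph.instGroupSelfHomeomorph {X : Type*} [TopologicalSpace X] : Group (X ≃ₜ X) where
  mul f g := g.trans f
  one := Homeomorph.refl X
  inv := Homeomorph.symm
  mul_assoc _ _ _ := Homeomorph.ext fun _ => rfl
  one_mul _ := Homeomorph.ext fun _ => rfl
  mul_one _ := Homeomorph.ext fun _ => rfl
  inv_mul_cancel f := Homeomorph.ext fun x => f.symm_apply_apply x

/-- The orbit equivalence relation on `X` determined by a group `Γ` of homeomorphisms of `X`:
two points are equivalent if some element of `Γ` maps one to the other.  The quotient
`Quotient (orbitSetoid Γ)` is the orbit space `X/Γ`, carrying the quotient topology, and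
`Quotient.mk _ : X → Quotient (orbitSetoid Γ)` is the quotient map `π`. -/
def orbitSetoid {X : Type*} [TopologicalSpace X] (Γ : Subgroup (X ≃ₜ X)) : Setoid X where
  r x y := ∃ h ∈ Γ, (h : X ≃ₜ X) x = y
  iseqv := by
    refine ⟨fun x => ⟨1, Γ.one_mem, rfl⟩, ?_, ?_⟩
    · rintro x y ⟨h, hh, rfl⟩
      exact ⟨h⁻¹, Γ.inv_mem hh, h.symm_apply_apply x⟩
    · rintro x y z ⟨h, hh, rfl⟩ ⟨h', hh', rfl⟩
      exact ⟨h' * h, Γ.mul_mem hh' hh, rfl⟩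

/-- **Lemma 3.2 (iii).**  Let `F` and `G` be commuting homeomorphisms of a topological space
`X` of finite orders `n ≥ 1` and `m ≥ 1` respectively, let `Ḡ` be the homeomorphism of
`X/⟨F⟩` induced by `G`, and suppose some point `x₀ ∈ X` has trivial stabilizer in `⟨F,G⟩`.
Then `|Ḡ| < m` if and only if `F^l = G^k` for some `0 < k < m` and `0 < l < n`. -/
theorem order_of_induced_map_lt_iff {X : Type*} [TopologicalSpace X]
    (F G : X ≃ₜ X) (hcomm : F * G = G * F) (n m : ℕ) (hn : 1 ≤ n) (hm : 1 ≤ m)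
    (hF : orderOf F = n) (hG : orderOf G = m)
    (Gbar : Quotient (orbitSetoid (Subgroup.zpowers F)) ≃ₜ
        Quotient (orbitSetoid (Subgroup.zpowers F)))
    (hGbar : ∀ x : X, Gbar (Quotient.mk _ x) = Quotient.mk _ (G x))
    (x₀ : X)
    (hx₀ : ∀ h ∈ Subgroup.closure ({F, G} : Set (X ≃ₜ X)), (h : X ≃ₜ X) x₀ = x₀ → h = 1) :
    orderOf Gbar < m ↔
      ∃ k l : ℕ, 0 < k ∧ k < m ∧ 0 < l ∧ l < n ∧ F ^ l = G ^ k := by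
  have mulapp : ∀ (f g : X ≃ₜ X) (x : X), (f * g) x = f (g x) := fun _ _ _ => rfl
  have key : ∀ (k : ℕ) (x : X),
      (Gbar ^ k) (Quotient.mk (orbitSetoid (Subgroup.zpowers F)) x) =
        Quotient.mk (orbitSetoid (Subgroup.zpowers F)) ((G ^ k) x) := by
    intro k
    induction k with
    | zero => intro x; rfl
    | succ k ih =>
      intro x
      have h1 : (Gbar ^ (k + 1)) (Quotient.mk (orbitSetoid (Subgroup.zpowers F)) x)
          = (Gbar ^ k) (Gbar (Quotient.mk (orbitSetoid (Subgroup.zpowers F)) x)) := by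
        rw [pow_succ]; rfl
      rw [h1, hGbar, ih]
      congr 1
  have hGm1 : G ^ m = 1 := by rw [← hG]; exact pow_orderOf_eq_one G
  have hGbarm : Gbar ^ m = 1 := by
    refine Homeomorph.ext ?_
    intro q
    induction q using Quotient.ind with
    | _ x => rw [key, hGm1]; rfl
  have hdvd : orderOf Gbar ∣ m := orderOf_dvd_of_pow_eq_one hGbarm
  have hpos : 0 < orderOf Gbar := by
    rcases Nat.eq_zero_or_pos (orderOf Gbar) with h0 | h
    · exfalso; rw [h0] at hdvd; omega
    · exact h
  constructor
  · intro hlt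
    have hGbark : Gbar ^ orderOf Gbar = 1 := pow_orderOf_eq_one Gbar
    have hmk : Quotient.mk (orbitSetoid (Subgroup.zpowers F)) ((G ^ orderOf Gbar) x₀)
        = Quotient.mk (orbitSetoid (Subgroup.zpowers F)) x₀ := by
      rw [← key, hGbark]; rfl
    obtain ⟨h, hh, hhx⟩ := Quotient.exact hmk
    obtain ⟨j, rfl⟩ := Subgroup.mem_zpowers_iff.mp hh
    have hFmem : F ∈ Subgroup.closure ({F, G} : Set (X ≃ₜ X)) :=
      Subgroup.subset_closure (by simp)
    have hGmem : G ∈ Subgroup.closure ({F, G} : Set (X ≃ₜ X)) :=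
      Subgroup.subset_closure (by simp)
    have hmem : F ^ j * G ^ orderOf Gbar ∈ Subgroup.closure ({F, G} : Set (X ≃ₜ X)) :=
      Subgroup.mul_mem _ (Subgroup.zpow_mem _ hFmem j) (Subgroup.pow_mem _ hGmem _)
    have hfix : (F ^ j * G ^ orderOf Gbar) x₀ = x₀ := by rw [mulapp]; exact hhx
    have heq1 : F ^ j * G ^ orderOf Gbar = 1 := hx₀ _ hmem hfix
    have hGk : G ^ orderOf Gbar = F ^ (-j) := by
      rw [zpow_neg]
      exact eq_inv_of_mul_eq_one_right heq1
    have hnpos : (0 : ℤ) < (n : ℤ) := by exact_mod_cast hn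
    have hmod_nonneg : 0 ≤ (-j) % (n : ℤ) := Int.emod_nonneg _ (by omega)
    have hmod_lt : (-j) % (n : ℤ) < n := Int.emod_lt_of_pos _ hnpos
    have hlcast : ((((-j) % (n : ℤ)).toNat : ℕ) : ℤ) = (-j) % (n : ℤ) :=
      Int.toNat_of_nonneg hmod_nonneg
    have hFl : F ^ ((-j) % (n : ℤ)).toNat = G ^ orderOf Gbar := by
      rw [hGk, ← zpow_natCast, hlcast, ← hF, zpow_mod_orderOf]
    have hlltn : ((-j) % (n : ℤ)).toNat < n := by omega
    have hlpos : 0 < ((-j) % (n : ℤ)).toNat := by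
      rcases Nat.eq_zero_or_pos ((-j) % (n : ℤ)).toNat with h0 | h
      · exfalso
        rw [h0, pow_zero] at hFl
        have hdvd2 : orderOf G ∣ orderOf Gbar := orderOf_dvd_of_pow_eq_one hFl.symm
        rw [hG] at hdvd2
        have := Nat.le_of_dvd hpos hdvd2
        omega
      · exact h
    exact ⟨orderOf Gbar, ((-j) % (n : ℤ)).toNat, hpos, hlt, hlpos, hlltn, hFl⟩
  · rintro ⟨k, l, hk0, hkm, hl0, hln, hFl⟩
    have hFlmem : F ^ l ∈ Subgroup.zpowers F := by
      rw [← zpow_natCast]; exact Subgroup.zpow_mem _ (Subgroup.mem_zpowers F) _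
    have hGbark : Gbar ^ k = 1 := by
      refine Homeomorph.ext ?_
      intro q
      induction q using Quotient.ind with
      | _ x =>
        rw [key, ← hFl]
        exact (Quotient.sound (⟨F ^ l, hFlmem, rfl⟩ :
            (orbitSetoid (Subgroup.zpowers F)).r x ((F ^ l) x))).symm
    have hdvd2 : orderOf Gbar ∣ k := orderOf_dvd_of_pow_eq_one hGbark
    have := Nat.le_of_dvd hk0 hdvd2
    omega
end

section
/- Let m, n ≥ 2 be integers with m dividing n, let r ≥ 1, and for each i = 1, …, r, let n_{i1} be a positive divisor of m and n_{i2} a positive divisor of n, set n_i := lcm(n_{i1}, n_{i2}), and let c_{i1}, c_{i2} be integers with gcd(c_{i1}, n_{i1}) = 1 and gcd(c_{i2}, n_{i2}) = 1. Define v_i := ((m/n_{i1})·c_{i1}, (n/n_{i2})·c_{i2}) ∈ ℤ/mℤ × ℤ/nℤ. Assume: (a) Σ_{i=1}^r (m/n_{i1})·c_{i1} ≡ 0 (mod m) and Σ_{i=1}^r (n/n_{i2})·c_{i2} ≡ 0 (mod n); and (b) there exist integers ℓ₁, …, ℓ_r and k₁, …, k_r such that Σ_{i=1}^r ℓ_i·v_i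 = (0, 1) and Σ_{i=1}^r k_i·v_i = (1, 0) in ℤ/mℤ × ℤ/nℤ. Let G₀ be the group with presentation ⟨ξ₁, …, ξ_r | ξ₁^{n₁} = ⋯ = ξ_r^{n_r} = ξ₁ξ₂⋯ξ_r = 1⟩. Then there exists a surjective group homomorphism φ : G₀ → ℤ/mℤ × ℤ/nℤ such that φ(ξ_i) = v_i and the order of φ(ξ_i) equals n_i, for each i = 1, …, r. -/
lemma aux_addOrderOf (m d : ℕ) (hm : 0 < m) (hd : d ∣ m) (hdpos : 0 < d)
    (c : ℤ) (hc : Int.gcd c d = 1) :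
    addOrderOf (((m / d : ℕ) : ZMod m) * (c : ZMod m)) = d := by
  have : NeZero m := ⟨hm.ne'⟩
  obtain ⟨t, ht⟩ := hd
  have htpos : 0 < t := by
    rcases Nat.eq_zero_or_pos t with h | h
    · subst h; simp [ht] at hm
    · exact h
  have htdiv : m / d = t := by rw [ht]; exact Nat.mul_div_cancel_left t hdpos
  have hx : (((m / d : ℕ) : ZMod m) * (c : ZMod m)) = (((t : ℤ) * c : ℤ) : ZMod m) := by
    rw [htdiv]; push_cast; ring
  rw [hx]
  apply Nat.dvd_antisymm
  · apply addOrderOf_dvd_of_nsmul_eq_zero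
    have h1 : d • ((((t : ℤ) * c : ℤ) : ZMod m)) = (((m : ℤ) * c : ℤ) : ZMod m) := by
      rw [nsmul_eq_mul, ht]; push_cast; ring
    rw [h1]; push_cast; simp
  · set k := addOrderOf ((((t : ℤ) * c : ℤ) : ZMod m)) with hk
    have hk0 : k • ((((t : ℤ) * c : ℤ) : ZMod m)) = 0 := addOrderOf_nsmul_eq_zero _
    have h2 : ((((k : ℤ) * c) * t : ℤ) : ZMod m) = 0 := by
      rw [nsmul_eq_mul] at hk0
      push_cast
      push_cast at hk0
      rw [← hk0]; ring
    rw [ZMod.intCast_zmod_eq_zero_iff_dvd, ht] at h2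
    push_cast at h2
    have h3 : (d : ℤ) ∣ (k : ℤ) * c :=
      (mul_dvd_mul_iff_right (by exact_mod_cast htpos.ne' : (t : ℤ) ≠ 0)).mp h2
    have hcop : IsCoprime ((d : ℕ) : ℤ) c := (Int.isCoprime_iff_gcd_eq_one.mpr hc).symm
    exact_mod_cast hcop.dvd_of_dvd_mul_right h3

/-- The "long relator" `ξ₁ ξ₂ ⋯ ξ_r` in the free group on `Fin r`. -/
def longRelator (r : ℕ) : FreeGroup (Fin r) :=
  ((List.finRange r).map FreeGroup.of).prod

/-- The relators `ξ₁^{n₁}, …, ξ_r^{n_r}, ξ₁ξ₂⋯ξ_r` of the genus-zero orbifold group of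
signature `(0; n₁, …, n_r)`. -/
def sphericalRelators (r : ℕ) (nn : Fin r → ℕ) : Set (FreeGroup (Fin r)) :=
  {w | ∃ i, w = FreeGroup.of i ^ nn i} ∪ {longRelator r}

/-- **Proposition 4.3, forward direction, genus-zero case.**  Given `2 ≤ m ∣ n`, divisors
`n_{i1} ∣ m`, `n_{i2} ∣ n`, `n_i = lcm(n_{i1}, n_{i2})`, and integers `c_{i1}, c_{i2}`
coprime to `n_{i1}, n_{i2}` respectively, set
`v_i = ((m/n_{i1})·c_{i1}, (n/n_{i2})·c_{i2}) ∈ ℤ/mℤ × ℤ/nℤ`.  If (a) both coordinate sums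
vanish, and (b) some integer combinations of the `v_i` equal `(0,1)` and `(1,0)`, then there
is a surjective homomorphism `φ` from the presented group
`⟨ξ₁, …, ξ_r ∣ ξ_i^{n_i}, ξ₁⋯ξ_r⟩` onto `ℤ/mℤ ⊕ ℤ/nℤ` with `φ(ξ_i) = v_i` of order `n_i`. -/
theorem exists_surjective_hom_of_abelian_data_genus_zero
    (m n : ℕ) (hm : 2 ≤ m) (hn : 2 ≤ n) (hmn : m ∣ n) (r : ℕ) (hr : 1 ≤ r)
    (n1 n2 : Fin r → ℕ) (hn1pos : ∀ i, 0 < n1 i) (hn2pos : ∀ i, 0 < n2 i)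
    (hn1 : ∀ i, n1 i ∣ m) (hn2 : ∀ i, n2 i ∣ n)
    (nn : Fin r → ℕ) (hnn : ∀ i, nn i = Nat.lcm (n1 i) (n2 i))
    (c1 c2 : Fin r → ℤ)
    (hc1 : ∀ i, Int.gcd (c1 i) (n1 i) = 1) (hc2 : ∀ i, Int.gcd (c2 i) (n2 i) = 1)
    (v : Fin r → ZMod m × ZMod n)
    (hv : ∀ i, v i = (((m / n1 i : ℕ) : ZMod m) * (c1 i : ZMod m),
                      ((n / n2 i : ℕ) : ZMod n) * (c2 i : ZMod n)))
    (ha1 : ∑ i, ((m / n1 i : ℕ) : ZMod m) * (c1 i : ZMod m) = 0)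
    (ha2 : ∑ i, ((n / n2 i : ℕ) : ZMod n) * (c2 i : ZMod n) = 0)
    (hb : ∃ l k : Fin r → ℤ,
      (∑ i, l i • v i) = ((0 : ZMod m), (1 : ZMod n)) ∧
      (∑ i, k i • v i) = ((1 : ZMod m), (0 : ZMod n))) :
    ∃ φ : PresentedGroup (sphericalRelators r nn) →* Multiplicative (ZMod m × ZMod n),
      Function.Surjective φ ∧
      ∀ i, φ (PresentedGroup.of i) = Multiplicative.ofAdd (v i) ∧
        orderOf (φ (PresentedGroup.of i)) = nn i := by
  have hmpos : 0 < m := by omega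
  have hnpos : 0 < n := by omega
  have : NeZero m := ⟨hmpos.ne'⟩
  have : NeZero n := ⟨hnpos.ne'⟩
  obtain ⟨l, k, hl, hk⟩ := hb
  set f : Fin r → Multiplicative (ZMod m × ZMod n) := fun i => Multiplicative.ofAdd (v i)
    with hf
  -- orders of the components
  have hord1 : ∀ i, addOrderOf ((v i).1) = n1 i := by
    intro i
    rw [hv i]
    exact aux_addOrderOf m (n1 i) hmpos (hn1 i) (hn1pos i) (c1 i) (hc1 i)
  have hord2 : ∀ i, addOrderOf ((v i).2) = n2 i := by
    intro i
    rw [hv i]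
    exact aux_addOrderOf n (n2 i) hnpos (hn2 i) (hn2pos i) (c2 i) (hc2 i)
  have hordv : ∀ i, addOrderOf (v i) = nn i := by
    intro i
    rw [Prod.addOrderOf, hord1 i, hord2 i, hnn i]
  -- nn i • v i = 0
  have hvzero : ∀ i, (nn i) • v i = 0 := by
    intro i
    rw [← addOrderOf_dvd_iff_nsmul_eq_zero, hordv i]
  -- sum of v i is 0
  have hsumv : (∑ i, v i) = 0 := by
    rw [Prod.ext_iff]
    constructor
    · rw [Prod.fst_sum]
      simpa [hv] using ha1
    · rw [Prod.snd_sum]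
      simpa [hv] using ha2
  -- relators map to 1
  have hrel : ∀ w ∈ sphericalRelators r nn, FreeGroup.lift f w = 1 := by
    rintro w (⟨i, rfl⟩ | rfl)
    · rw [map_pow, FreeGroup.lift_apply_of, hf]
      rw [← ofAdd_nsmul, hvzero i]
      rfl
    · show FreeGroup.lift f (longRelator r) = 1
      rw [longRelator, map_list_prod]
      have : ((List.finRange r).map FreeGroup.of).map (FreeGroup.lift f)
          = (List.finRange r).map f := by
        rw [List.map_map]
        congr 1
        funext i
        simp
      rw [this, ← Fin.prod_univ_def, hf]
      simp only []
      rw [← ofAdd_sum, hsumv]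
      rfl
  refine ⟨PresentedGroup.toGroup hrel, ?_, ?_⟩
  · -- surjectivity
    intro x
    set a : ZMod m := x.toAdd.1
    set b : ZMod n := x.toAdd.2
    set e : Fin r → ℤ := fun i => (a.val : ℤ) * k i + (b.val : ℤ) * l i with he
    refine ⟨((List.finRange r).map (fun i =>
      (PresentedGroup.of i : PresentedGroup (sphericalRelators r nn)) ^ e i)).prod, ?_⟩
    rw [map_list_prod, List.map_map]
    have hterm : ((PresentedGroup.toGroup hrel) ∘ fun i => PresentedGroup.of i ^ e i)
        = fun i => Multiplicative.ofAdd (e i • v i) := by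
      funext i
      simp only [Function.comp_apply]
      rw [map_zpow, PresentedGroup.toGroup.of, hf, ofAdd_zsmul]
    rw [hterm, ← Fin.prod_univ_def, ← ofAdd_sum]
    have hsum : (∑ i, e i • v i) = x.toAdd := by
      have : (∑ i, e i • v i)
          = (a.val : ℤ) • (∑ i, k i • v i) + (b.val : ℤ) • (∑ i, l i • v i) := by
        rw [Finset.smul_sum, Finset.smul_sum, ← Finset.sum_add_distrib]
        congr 1
        funext i
        rw [he]
        simp [add_smul, mul_smul]
      rw [this, hl, hk]
      ext
      · simp [a, ZMod.natCast_val, ZMod.cast_id]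
      · simp [b, ZMod.natCast_val, ZMod.cast_id]
    rw [hsum]
    rfl
  · intro i
    have hof : (PresentedGroup.toGroup hrel) (PresentedGroup.of i)
        = Multiplicative.ofAdd (v i) := PresentedGroup.toGroup.of hrel
    refine ⟨hof, ?_⟩
    rw [hof, orderOf_ofAdd_eq_addOrderOf, hordv i]
end

section
/- Let m, n ≥ 2 be integers with m dividing n, let n₁, …, n_r be integers ≥ 1, and let G₀ be the group with presentation ⟨ξ₁, …, ξ_r | ξ₁^{n₁} = ⋯ = ξ_r^{n_r} = ξ₁ξ₂⋯ξ_r = 1⟩. Suppose ψ : G₀ → ℤ/mℤ × ℤ/nℤ is a surjective group homomorphism such that the order of ψ(ξ_i) equals n_i for each i. Then for each i = 1, …, r there exist a positive divisor n_{i1} of m, a positive divisor n_{i2} of n, and integers c_{i1}, c_{i2} with gcd(c_{i1}, n_{i1}) = 1, gcd(c_{i2}, n_{i2}) = 1 and lcm(n_{i1}, n_{i2}) = n_i, such that ψ(ξ_i) = ((m/n_{i1})·c_{i1}, (n/n_{i2})·c_{i2}); moreover Σ_{i=1}^r (m/n_{i1})·c_{i1} ≡ 0 (mod m), Σ_{i=1}^r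 (n/n_{i2})·c_{i2} ≡ 0 (mod n), and there exist integers ℓ₁, …, ℓ_r and k₁, …, k_r with Σ_{i=1}^r ℓ_i·ψ(ξ_i) = (0, 1) and Σ_{i=1}^r k_i·ψ(ξ_i) = (1, 0) in ℤ/mℤ × ℤ/nℤ. -/
lemma zmod_decomp {N : ℕ} (hN : N ≠ 0) (x : ZMod N) :
    ∃ c : ℤ, Int.gcd c (addOrderOf x) = 1 ∧
      x = ((N / addOrderOf x : ℕ) : ZMod N) * (c : ZMod N) := by
  haveI : NeZero N := ⟨hN⟩
  have hx : ((x.val : ℕ) : ZMod N) = x := ZMod.natCast_rightInverse x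
  set a := x.val with ha
  set g := N.gcd a with hgdef
  have hg : g ∣ N := Nat.gcd_dvd_left _ _
  have hga : g ∣ a := Nat.gcd_dvd_right _ _
  have hgpos : 0 < g := Nat.gcd_pos_of_pos_left a (Nat.pos_of_ne_zero hN)
  have hord : addOrderOf x = N / g := by rw [← hx]; exact ZMod.addOrderOf_coe a hN
  refine ⟨((a / g : ℕ) : ℤ), ?_, ?_⟩
  · rw [hord, Int.gcd_natCast_natCast]
    exact (Nat.coprime_div_gcd_div_gcd (m := N) (n := a) hgpos).symm
  · rw [hord, Nat.div_div_self hg hN, ← hx, Int.cast_natCast, ← Nat.cast_mul,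
      Nat.mul_div_cancel' hga]

/-- **Proposition 4.3, converse direction.**  Let `2 ≤ m ∣ n`, and let
`ψ : ⟨ξ₁, …, ξ_r ∣ ξ_i^{n_i}, ξ₁⋯ξ_r⟩ → ℤ/mℤ ⊕ ℤ/nℤ` be a surjective homomorphism with
`ord(ψ(ξ_i)) = n_i` for each `i`.  Then for each `i` there are positive divisors
`n_{i1} ∣ m`, `n_{i2} ∣ n` and integers `c_{i1}, c_{i2}` coprime to them, with
`lcm(n_{i1}, n_{i2}) = n_i` and `ψ(ξ_i) = ((m/n_{i1})·c_{i1}, (n/n_{i2})·c_{i2})`;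
moreover both coordinate sums vanish, and some integer combinations of the `ψ(ξ_i)`
equal `(0,1)` and `(1,0)`. -/
theorem abelian_data_of_surjective_hom
    (m n : ℕ) (hm : 2 ≤ m) (hn : 2 ≤ n) (hmn : m ∣ n) (r : ℕ)
    (nn : Fin r → ℕ) (hnn : ∀ i, 1 ≤ nn i)
    (ψ : PresentedGroup (sphericalRelators r nn) →* Multiplicative (ZMod m × ZMod n))
    (hsurj : Function.Surjective ψ)
    (hord : ∀ i, orderOf (ψ (PresentedGroup.of i)) = nn i) :
    ∃ (n1 n2 : Fin r → ℕ) (c1 c2 : Fin r → ℤ),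
      (∀ i, 0 < n1 i ∧ n1 i ∣ m ∧ 0 < n2 i ∧ n2 i ∣ n ∧
        Int.gcd (c1 i) (n1 i) = 1 ∧ Int.gcd (c2 i) (n2 i) = 1 ∧
        Nat.lcm (n1 i) (n2 i) = nn i ∧
        Multiplicative.toAdd (ψ (PresentedGroup.of i)) =
          (((m / n1 i : ℕ) : ZMod m) * (c1 i : ZMod m),
           ((n / n2 i : ℕ) : ZMod n) * (c2 i : ZMod n))) ∧
      (∑ i, ((m / n1 i : ℕ) : ZMod m) * (c1 i : ZMod m)) = 0 ∧
      (∑ i, ((n / n2 i : ℕ) : ZMod n) * (c2 i : ZMod n)) = 0 ∧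
      ∃ l k : Fin r → ℤ,
        (∑ i, l i • Multiplicative.toAdd (ψ (PresentedGroup.of i))) =
          ((0 : ZMod m), (1 : ZMod n)) ∧
        (∑ i, k i • Multiplicative.toAdd (ψ (PresentedGroup.of i))) =
          ((1 : ZMod m), (0 : ZMod n)) := by
  have hm0 : m ≠ 0 := by omega
  have hn0 : n ≠ 0 := by omega
  haveI : NeZero m := ⟨hm0⟩
  haveI : NeZero n := ⟨hn0⟩
  set a : Fin r → ZMod m × ZMod n := fun i => Multiplicative.toAdd (ψ (PresentedGroup.of i))
    with hadef
  have haord : ∀ i, addOrderOf (a i) = nn i := fun i => hord i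
  choose c1 hc1 hx1 using fun i => zmod_decomp hm0 (a i).1
  choose c2 hc2 hx2 using fun i => zmod_decomp hn0 (a i).2
  -- sum of a i is zero
  have h1 : (PresentedGroup.mk (sphericalRelators r nn) (longRelator r)) = 1 := by
    apply (QuotientGroup.eq_one_iff _).2
    exact Subgroup.subset_normalClosure (Or.inr rfl)
  have h3 : ((List.finRange r).map (fun i => ψ (PresentedGroup.of i))).prod = 1 := by
    have h2 := congrArg ψ h1
    rw [map_one] at h2
    calc ((List.finRange r).map fun i => ψ (PresentedGroup.of i)).prod
        = ((List.finRange r).map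
            ((ψ.comp (PresentedGroup.mk (sphericalRelators r nn))) ∘ FreeGroup.of)).prod := rfl
      _ = (ψ.comp (PresentedGroup.mk (sphericalRelators r nn)))
            (((List.finRange r).map FreeGroup.of).prod) := by
          rw [map_list_prod, List.map_map]
      _ = 1 := h2
  have hsum : ∑ i, a i = 0 := by
    have : ∏ i, ψ (PresentedGroup.of i) = 1 := by rw [Fin.prod_univ_def]; exact h3
    have := congrArg Multiplicative.toAdd this
    rw [toAdd_prod] at this
    exact this
  -- elements are integer combinations
  have hmem : ∀ x : ZMod m × ZMod n, ∃ l : Fin r → ℤ, ∑ i, l i • a i = x := by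
    have htop : ∀ g : PresentedGroup (sphericalRelators r nn),
        Multiplicative.toAdd (ψ g) ∈ AddSubgroup.closure (Set.range a) := by
      intro g
      have hg : g ∈ Subgroup.closure
          (Set.range (PresentedGroup.of : Fin r → PresentedGroup (sphericalRelators r nn))) := by
        rw [PresentedGroup.closure_range_of]; trivial
      refine Subgroup.closure_induction ?_ ?_ ?_ ?_ hg
      · rintro x ⟨i, rfl⟩
        exact AddSubgroup.subset_closure ⟨i, rfl⟩
      · simpa using zero_mem _
      · intro x y _ _ hx hy
        rw [map_mul, toAdd_mul]
        exact add_mem hx hy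
      · intro x _ hx
        rw [map_inv, toAdd_inv]
        exact neg_mem hx
    intro x
    obtain ⟨g, hg⟩ := hsurj (Multiplicative.ofAdd x)
    have hx : x ∈ AddSubgroup.closure (Set.range a) := by
      have := htop g
      rwa [hg, toAdd_ofAdd] at this
    rw [← Submodule.span_int_eq_addSubgroupClosure, Submodule.mem_toAddSubgroup,
      Finsupp.mem_span_range_iff_exists_finsupp] at hx
    obtain ⟨c, hc⟩ := hx
    refine ⟨fun i => c i, ?_⟩
    rw [← hc, Finsupp.sum_fintype]
    intro i; simp
  refine ⟨fun i => addOrderOf (a i).1, fun i => addOrderOf (a i).2, c1, c2, ?_, ?_, ?_, ?_⟩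
  · intro i
    refine ⟨addOrderOf_pos _, ?_, addOrderOf_pos _, ?_, hc1 i, hc2 i, ?_, ?_⟩
    · have := addOrderOf_dvd_card (x := (a i).1)
      rwa [ZMod.card] at this
    · have := addOrderOf_dvd_card (x := (a i).2)
      rwa [ZMod.card] at this
    · rw [← Prod.addOrderOf, haord]
    · exact Prod.ext (hx1 i) (hx2 i)
  · have := congrArg Prod.fst hsum
    rw [Prod.fst_sum] at this
    simpa [← hx1] using this
  · have := congrArg Prod.snd hsum
    rw [Prod.snd_sum] at this
    simpa [← hx2] using this
  · obtain ⟨l, hl⟩ := hmem (0, 1)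
    obtain ⟨k, hk⟩ := hmem (1, 0)
    exact ⟨l, k, hl, hk⟩
end
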